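/- Let G be a finite group, N a subgroup of index 2 in G, and H a subgroup of N. Suppose there exists an element c of order 2 in G with c ∉ N. Then the set of elements g ∈ G such that g ∉ N and g² ∈ H has cardinality at least |H|. -/
import Mathlib

theorem stmt0 (G : Type*) [Group G] [Fintype G] (N H : Subgroup G)
    (hN : N.index = 2) (hHN : H ≤ N) (c : G) (hc2 : c ^ 2 = 1) (hc1 : c ≠ 1)
    (hcN : c ∉ N) :
    Nat.card H ≤ Nat.card {g : G | g ∉ N ∧ g ^ 2 ∈ H} := by
  classical
  have hcc : c * c = 1 := by rw [← sq]; exact hc2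
  have hcl : ∀ x : G, c * (c * x) = x := fun x => by rw [← mul_assoc, hcc, one_mul]
  have hcinv : c⁻¹ = c := inv_eq_of_mul_eq_one_right hcc
  -- the subgroup of H of elements k with c * k * c ∈ H
  let K' : Subgroup H :=
  { carrier := {h | c * (h : G) * c ∈ H}
    one_mem' := by simp [hcc, H.one_mem]
    mul_mem' := by
      intro a b ha hb
      have : c * ((a : G) * b) * c = (c * a * c) * (c * b * c) := by
        simp [mul_assoc, hcl]
      simpa [this] using H.mul_mem ha hb
    inv_mem' := by
      intro a ha
      have : c * (a : G)⁻¹ * c = (c * (a : G) * c)⁻¹ := by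
        simp [mul_inv_rev, hcinv, mul_assoc]
      simpa [this] using H.inv_mem ha }
  have hK'mem : ∀ x : H, x ∈ K' ↔ c * (x : G) * c ∈ H := fun x => Iff.rfl
  -- representative of the coset of h
  let rep : H → H := fun h => (QuotientGroup.mk h : H ⧸ K').out
  have hrep : ∀ h : H, (rep h)⁻¹ * h ∈ K' := by
    intro h
    exact QuotientGroup.eq.mp ((QuotientGroup.mk h : H ⧸ K').out_eq')
  -- the injection
  set X : Set G := {g : G | g ∉ N ∧ g ^ 2 ∈ H} with hX
  have hmem : ∀ h : H, ((rep h : G) * c * ((rep h : G)⁻¹ * h) * (rep h : G)⁻¹) ∈ X := by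
    intro h
    set a : G := (rep h : G) with ha
    set k : G := a⁻¹ * h with hk
    have haH : a ∈ H := (rep h).2
    have hkH : k ∈ H := H.mul_mem (H.inv_mem haH) h.2
    have hckc : c * k * c ∈ H := (hK'mem _).mp (hrep h)
    constructor
    · intro hmemN
      have hcval : c = a⁻¹ * (a * c * k * a⁻¹) * a * k⁻¹ := by group
      have : c ∈ N := by
        rw [hcval]
        exact N.mul_mem (N.mul_mem (N.mul_mem (N.inv_mem (hHN haH)) hmemN) (hHN haH))
          (N.inv_mem (hHN hkH))
      exact hcN this
    · have hsq : (a * c * k * a⁻¹) ^ 2 = a * ((c * k * c) * k) * a⁻¹ := by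
        rw [sq]; simp [mul_assoc, hcl]
      rw [hsq]
      exact H.mul_mem (H.mul_mem haH (H.mul_mem hckc hkH)) (H.inv_mem haH)
  let Φ : H → X := fun h => ⟨_, hmem h⟩
  have hΦ : Function.Injective Φ := by
    intro h₁ h₂ heq
    have heq' : (rep h₁ : G) * c * ((rep h₁ : G)⁻¹ * h₁) * (rep h₁ : G)⁻¹ =
        (rep h₂ : G) * c * ((rep h₂ : G)⁻¹ * h₂) * (rep h₂ : G)⁻¹ := congrArg Subtype.val heq
    set a₁ : G := (rep h₁ : G) with ha₁
    set a₂ : G := (rep h₂ : G) with ha₂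
    set k₁ : G := a₁⁻¹ * h₁ with hk₁
    set k₂ : G := a₂⁻¹ * h₂ with hk₂
    have hk₁H : k₁ ∈ H := H.mul_mem (H.inv_mem (rep h₁).2) h₁.2
    have hk₂H : k₂ ∈ H := H.mul_mem (H.inv_mem (rep h₂).2) h₂.2
    set u : G := a₂⁻¹ * a₁ with hu
    have key : c * u * c * k₁ = k₂ * u := by
      have e1 : c * u * c * k₁ = c * (a₂⁻¹ * (a₁ * c * k₁ * a₁⁻¹) * a₁) := by
        rw [hu]; group
      rw [e1, heq']
      have e2 : c * (a₂⁻¹ * (a₂ * c * k₂ * a₂⁻¹) * a₁) = (c * c) * (k₂ * (a₂⁻¹ * a₁)) := by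
        group
      rw [e2, hcc, one_mul, hu]
    have hcuc : c * u * c ∈ H := by
      have : c * u * c = (k₂ * u) * k₁⁻¹ := by rw [← key]; group
      rw [this]
      exact H.mul_mem (H.mul_mem hk₂H (H.mul_mem (H.inv_mem (rep h₂).2) (rep h₁).2))
        (H.inv_mem hk₁H)
    have huK : (rep h₂)⁻¹ * (rep h₁) ∈ K' := by
      rw [hK'mem]
      exact hcuc
    have hmkeq : (QuotientGroup.mk (h₁) : H ⧸ K') = QuotientGroup.mk (h₂) := by
      have e1 : (QuotientGroup.mk (rep h₂) : H ⧸ K') = QuotientGroup.mk (rep h₁) :=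
        QuotientGroup.eq.mpr huK
      have e2 := (QuotientGroup.mk h₁ : H ⧸ K').out_eq'
      have e3 := (QuotientGroup.mk h₂ : H ⧸ K').out_eq'
      rw [← e2, ← e3]
      exact e1.symm
    have hreps : rep h₁ = rep h₂ := congrArg Quotient.out hmkeq
    have ha : a₁ = a₂ := by rw [ha₁, ha₂, hreps]
    have hval : (h₁ : G) = (h₂ : G) := by
      rw [← ha] at heq'
      have hk : k₁ = k₂ := mul_left_cancel (mul_right_cancel heq')
      have e1 : (h₁ : G) = a₁ * k₁ := by rw [hk₁]; group
      have e2 : (h₂ : G) = a₂ * k₂ := by rw [hk₂]; group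
      rw [e1, e2, ha, hk]
    exact Subtype.ext hval
  exact Nat.card_le_card_of_injective Φ hΦ
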